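/- For every integer λ ≥ 2, the tree T_λ has exactly two main eigenvalues, and exactly three distinct vertex degrees, and its valency partition is equitable. -/

import Mathlib

open Matrix

def SimpleGraph.IsMainEigenvalue {V : Type*} [Fintype V] [DecidableEq V]
    (G : SimpleGraph V) [DecidableRel G.Adj] (μ : ℝ) : Prop :=
  ∃ x : V → ℝ, x ≠ 0 ∧ (G.adjMatrix ℝ).mulVec x = μ • x ∧ x ⬝ᵥ (fun _ => (1 : ℝ)) ≠ 0

/-- Vertex set of the harmonic tree `T_λ`: a center, `λ² - λ + 1` middle vertices,
and `λ - 1` leaves attached to each middle vertex. -/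
abbrev TlamV (l : ℕ) : Type :=
  Unit ⊕ Fin (l ^ 2 - l + 1) ⊕ (Fin (l ^ 2 - l + 1) × Fin (l - 1))

/-- The harmonic tree `T_λ`: the center is adjacent to every middle vertex, and each
middle vertex `i` is adjacent to its `λ - 1` private leaves. -/
def Tlam (l : ℕ) : SimpleGraph (TlamV l) :=
  SimpleGraph.fromRel (fun a b =>
    match a, b with
    | Sum.inl _, Sum.inr (Sum.inl _) => True
    | Sum.inr (Sum.inl i), Sum.inr (Sum.inr p) => p.1 = i
    | _, _ => False)

section Aux

open Finset

variable {l : ℕ} [DecidableRel (Tlam l).Adj]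
set_option linter.unusedSectionVars false

@[simp] lemma adj_cc (u u' : Unit) : ¬ (Tlam l).Adj (.inl u) (.inl u') := by simp [Tlam]
@[simp] lemma adj_cm (u i) : (Tlam l).Adj (.inl u) (.inr (.inl i)) := by simp [Tlam]
@[simp] lemma adj_cl (u p) : ¬ (Tlam l).Adj (.inl u) (.inr (.inr p)) := by simp [Tlam]
@[simp] lemma adj_mc (u i) : (Tlam l).Adj (.inr (.inl i)) (.inl u) := by simp [Tlam]
@[simp] lemma adj_mm (i j) : ¬ (Tlam l).Adj (.inr (.inl i)) (.inr (.inl j)) := by simp [Tlam]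
@[simp] lemma adj_ml (i p) : (Tlam l).Adj (.inr (.inl i)) (.inr (.inr p)) ↔ p.1 = i := by simp [Tlam]
@[simp] lemma adj_lc (u p) : ¬ (Tlam l).Adj (.inr (.inr p)) (.inl u) := by simp [Tlam]
@[simp] lemma adj_lm (i p) : (Tlam l).Adj (.inr (.inr p)) (.inr (.inl i)) ↔ p.1 = i := by simp [Tlam]
@[simp] lemma adj_ll (p q) : ¬ (Tlam l).Adj (.inr (.inr p)) (.inr (.inr q)) := by simp [Tlam]

lemma deg_eq (v) : (Tlam l).degree v = ∑ w, if (Tlam l).Adj v w then 1 else 0 := by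
  rw [SimpleGraph.degree, SimpleGraph.neighborFinset_eq_filter, Finset.card_filter]

lemma deg_center (u : Unit) : (Tlam l).degree (.inl u) = l^2-l+1 := by
  rw [deg_eq]
  simp only [Fintype.sum_sum_type, Fintype.sum_prod_type, adj_cc, adj_cm, adj_cl,
    if_true, if_false, Finset.sum_const, smul_eq_mul, mul_one, mul_zero,
    Finset.sum_const_zero, Fintype.card_fin, Finset.card_univ]
  simp

lemma deg_mid (hl : 2 ≤ l) (i) : (Tlam l).degree (.inr (.inl i)) = l := by
  rw [deg_eq]
  simp only [Fintype.sum_sum_type, Fintype.sum_prod_type, adj_mc, adj_mm, adj_ml,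
    if_true, if_false, Finset.sum_const, smul_eq_mul, mul_one, mul_zero,
    Finset.sum_const_zero, Fintype.card_fin, Finset.card_univ]
  simp [apply_ite Finset.card, Finset.sum_ite_eq]
  omega

lemma deg_leaf (p) : (Tlam l).degree (.inr (.inr p)) = 1 := by
  rw [deg_eq]
  simp only [Fintype.sum_sum_type, Fintype.sum_prod_type, adj_lc, adj_lm, adj_ll,
    if_true, if_false, Finset.sum_const, smul_eq_mul, mul_one, mul_zero,
    Finset.sum_const_zero, Fintype.card_fin, Finset.card_univ]
  simp

lemma mulVec_apply (x) (v) : ((Tlam l).adjMatrix ℝ *ᵥ x) v = ∑ w, if (Tlam l).Adj v w then x w else 0 := by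
  rw [SimpleGraph.adjMatrix_mulVec_apply, SimpleGraph.neighborFinset_eq_filter, Finset.sum_filter]

lemma hA1 : (Tlam l).adjMatrix ℝ *ᵥ (fun _ => (1:ℝ)) = fun v => ((Tlam l).degree v : ℝ) := by
  funext v
  simpa using SimpleGraph.adjMatrix_mulVec_const_apply (G := Tlam l) (a := (1:ℝ)) (v := v)

lemma hAd (hl : 2 ≤ l) : (Tlam l).adjMatrix ℝ *ᵥ (fun v => ((Tlam l).degree v : ℝ))
    = (l:ℝ) • (fun v => ((Tlam l).degree v : ℝ)) := by
  have hle : l ≤ l^2 := by nlinarith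
  have e1 : ((l^2-l+1:ℕ):ℝ) = (l:ℝ)^2 - l + 1 := by
    push_cast [Nat.cast_sub hle]; ring
  funext v
  rcases v with u | i | p
  · rw [_root_.mulVec_apply]
    simp only [Fintype.sum_sum_type, Fintype.sum_prod_type, adj_cc, adj_cm, adj_cl,
      if_true, if_false, Finset.sum_const_zero, Pi.smul_apply, smul_eq_mul,
      deg_center, deg_mid hl, deg_leaf]
    simp [e1]; ring
  · rw [_root_.mulVec_apply]
    simp only [Fintype.sum_sum_type, Fintype.sum_prod_type, adj_mc, adj_mm, adj_ml,
      if_true, if_false, Finset.sum_const_zero, Pi.smul_apply, smul_eq_mul,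
      deg_center, deg_mid hl, deg_leaf]
    simp [e1, Finset.sum_ite_eq, apply_ite]
    have e2 : ((l-1:ℕ):ℝ) = (l:ℝ) - 1 := by
      push_cast [Nat.cast_sub (by omega : 1 ≤ l)]; ring
    rw [e2]; ring
  · rw [_root_.mulVec_apply]
    simp only [Fintype.sum_sum_type, Fintype.sum_prod_type, adj_lc, adj_lm, adj_ll,
      if_true, if_false, Finset.sum_const_zero, Pi.smul_apply, smul_eq_mul,
      deg_center, deg_mid hl, deg_leaf]
    simp [Finset.sum_ite_eq]

lemma vecMul_eq (x : TlamV l → ℝ) : x ᵥ* (Tlam l).adjMatrix ℝ = (Tlam l).adjMatrix ℝ *ᵥ x := by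
  ext v; simp

lemma hsym (x y : TlamV l → ℝ) :
    ((Tlam l).adjMatrix ℝ *ᵥ x) ⬝ᵥ y = x ⬝ᵥ ((Tlam l).adjMatrix ℝ *ᵥ y) := by
  rw [Matrix.dotProduct_mulVec, vecMul_eq]

lemma dotd_pos (hl : 2 ≤ l) : 0 < (fun v => ((Tlam l).degree v : ℝ)) ⬝ᵥ (fun _ => (1:ℝ)) := by
  have hle : l ≤ l^2 := by nlinarith
  have e1 : ((l^2-l+1:ℕ):ℝ) = (l:ℝ)^2 - l + 1 := by
    push_cast [Nat.cast_sub hle]; ring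
  have e2 : ((l-1:ℕ):ℝ) = (l:ℝ) - 1 := by
    push_cast [Nat.cast_sub (by omega : 1 ≤ l)]; ring
  have hl2 : (2:ℝ) ≤ (l:ℝ) := by exact_mod_cast hl
  simp only [dotProduct, Fintype.sum_sum_type, Fintype.sum_prod_type,
    deg_center, deg_mid hl, deg_leaf, mul_one, Finset.sum_const, smul_eq_mul,
    Finset.card_univ, Fintype.card_fin]
  simp [e1, e2]
  nlinarith

lemma dotx_pos (hl : 2 ≤ l) :
    0 < ((l:ℝ) • (fun _ => (1:ℝ)) - fun v => ((Tlam l).degree v : ℝ)) ⬝ᵥ (fun _ => (1:ℝ)) := by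
  have hle : l ≤ l^2 := by nlinarith
  have e1 : ((l^2-l+1:ℕ):ℝ) = (l:ℝ)^2 - l + 1 := by
    push_cast [Nat.cast_sub hle]; ring
  have e2 : ((l-1:ℕ):ℝ) = (l:ℝ) - 1 := by
    push_cast [Nat.cast_sub (by omega : 1 ≤ l)]; ring
  have hl2 : (2:ℝ) ≤ (l:ℝ) := by exact_mod_cast hl
  simp only [dotProduct, Pi.sub_apply, Pi.smul_apply, smul_eq_mul, mul_one,
    Fintype.sum_sum_type, Fintype.sum_prod_type,
    deg_center, deg_mid hl, deg_leaf, Finset.sum_const, Finset.card_univ, Fintype.card_fin]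
  simp [e1, e2]
  have h1 : (0:ℝ) ≤ (l:ℝ)^2-(l:ℝ)+1 := by nlinarith
  have h3 : (0:ℝ) ≤ (l:ℝ)-2 := by nlinarith
  nlinarith [mul_nonneg (mul_nonneg h1 (by nlinarith : (0:ℝ) ≤ (l:ℝ))) h3, sq_nonneg ((l:ℝ)-1)]

lemma count_eq (v k) : (((Tlam l).neighborFinset v).filter (fun z => (Tlam l).degree z = k)).card
    = ∑ w, if ((Tlam l).Adj v w ∧ (Tlam l).degree w = k) then 1 else 0 := by
  rw [SimpleGraph.neighborFinset_eq_filter, Finset.filter_filter, Finset.card_filter]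

lemma count_center (hl : 2 ≤ l) (u : Unit) (k : ℕ) :
    (((Tlam l).neighborFinset (.inl u)).filter (fun z => (Tlam l).degree z = k)).card
    = if k = l then l^2-l+1 else 0 := by
  rw [count_eq]
  simp only [Fintype.sum_sum_type, Fintype.sum_prod_type, adj_cc, adj_cm, adj_cl,
    deg_center, deg_mid hl, deg_leaf, true_and, false_and, if_false, if_true,
    Finset.sum_const_zero, Finset.sum_const, smul_eq_mul, mul_one,
    Finset.card_univ, Fintype.card_fin]
  by_cases hk : k = l <;> simp [hk] <;> omega

lemma count_mid (hl : 2 ≤ l) (i) (k : ℕ) :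
    (((Tlam l).neighborFinset (.inr (.inl i))).filter (fun z => (Tlam l).degree z = k)).card
    = (if k = l^2-l+1 then 1 else 0) + (if k = 1 then l-1 else 0) := by
  rw [count_eq]
  simp only [Fintype.sum_sum_type, Fintype.sum_prod_type, adj_mc, adj_mm, adj_ml,
    deg_center, deg_mid hl, deg_leaf, true_and, false_and, if_false, if_true, ite_and,
    Finset.sum_const_zero, Finset.sum_const, smul_eq_mul, mul_one, mul_zero, mul_ite,
    Finset.card_univ, Fintype.card_fin, Finset.sum_ite_eq, Finset.sum_ite_eq', Finset.mem_univ]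
  have h2l : 2*l ≤ l^2 := by nlinarith
  by_cases h1 : k = l^2-l+1 <;> by_cases h2 : k = 1 <;> simp [h1, h2, eq_comm]

lemma count_leaf (hl : 2 ≤ l) (p) (k : ℕ) :
    (((Tlam l).neighborFinset (.inr (.inr p))).filter (fun z => (Tlam l).degree z = k)).card
    = if k = l then 1 else 0 := by
  rw [count_eq]
  simp only [Fintype.sum_sum_type, Fintype.sum_prod_type, adj_lc, adj_lm, adj_ll,
    deg_center, deg_mid hl, deg_leaf, true_and, false_and, if_false, if_true,
    Finset.sum_const_zero, Finset.sum_const, smul_eq_mul, mul_one,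
    Finset.card_univ, Fintype.card_fin]
  simp only [ite_and, Finset.sum_ite_eq', Finset.mem_univ, if_true]
  by_cases hk : k = l <;> simp [hk] <;> omega

end Aux

theorem stmt_17 (l : ℕ) (hl : 2 ≤ l) [DecidableRel (Tlam l).Adj] :
    {μ : ℝ | (Tlam l).IsMainEigenvalue μ}.ncard = 2 ∧
    {d : ℕ | ∃ v : TlamV l, (Tlam l).degree v = d}.ncard = 3 ∧
    (∀ v w : TlamV l, (Tlam l).degree v = (Tlam l).degree w →
      ∀ k : ℕ, (((Tlam l).neighborFinset v).filter (fun z => (Tlam l).degree z = k)).card =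
        (((Tlam l).neighborFinset w).filter (fun z => (Tlam l).degree z = k)).card) := by
  have hle : l ≤ l^2 := by nlinarith
  have h2l : 2*l ≤ l^2 := by nlinarith
  have hm1 : l^2-l+1 ≠ 1 := by omega
  have hml : l^2-l+1 ≠ l := by omega
  have hl1 : l ≠ 1 := by omega
  have hmpos : 0 < l^2-l+1 := by omega
  have hl1pos : 0 < l - 1 := by omega
  set dvec : TlamV l → ℝ := fun v => ((Tlam l).degree v : ℝ) with hdvec
  refine ⟨?_, ?_, ?_⟩
  · -- main eigenvalues
    have hset : {μ : ℝ | (Tlam l).IsMainEigenvalue μ} = {0, (l:ℝ)} := by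
      ext μ
      simp only [Set.mem_setOf_eq, Set.mem_insert_iff, Set.mem_singleton_iff]
      constructor
      · rintro ⟨x, hx0, hAx, hx1⟩
        have e2 : μ * (x ⬝ᵥ dvec) = (l:ℝ) * (x ⬝ᵥ dvec) := by
          have := hsym (l := l) x dvec
          rw [hAd hl] at this
          calc μ * (x ⬝ᵥ dvec) = (μ • x) ⬝ᵥ dvec := by rw [smul_dotProduct, smul_eq_mul]
            _ = ((Tlam l).adjMatrix ℝ *ᵥ x) ⬝ᵥ dvec := by rw [hAx]
            _ = x ⬝ᵥ ((l:ℝ) • dvec) := by rw [hsym, hAd hl]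
            _ = (l:ℝ) * (x ⬝ᵥ dvec) := by rw [dotProduct_smul, smul_eq_mul]
        have e1 : μ * (x ⬝ᵥ (fun _ => (1:ℝ))) = x ⬝ᵥ dvec := by
          calc μ * (x ⬝ᵥ (fun _ => (1:ℝ))) = (μ • x) ⬝ᵥ (fun _ => (1:ℝ)) := by rw [smul_dotProduct, smul_eq_mul]
            _ = ((Tlam l).adjMatrix ℝ *ᵥ x) ⬝ᵥ (fun _ => (1:ℝ)) := by rw [hAx]
            _ = x ⬝ᵥ ((Tlam l).adjMatrix ℝ *ᵥ (fun _ => (1:ℝ))) := by rw [hsym]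
            _ = x ⬝ᵥ dvec := by rw [hA1]
        by_cases hμ : μ = (l:ℝ)
        · right; exact hμ
        · left
          have hxd : x ⬝ᵥ dvec = 0 := by
            by_contra h
            exact hμ (mul_right_cancel₀ h e2)
          rw [hxd] at e1
          exact (mul_eq_zero.mp e1).resolve_right hx1
      · rintro (rfl | rfl)
        · refine ⟨(l:ℝ) • (fun _ => (1:ℝ)) - dvec, ?_, ?_, ?_⟩
          · intro h
            have := congrFun h (.inr (.inr (⟨0, hmpos⟩, ⟨0, hl1pos⟩)))
            simp [hdvec, deg_leaf] at this
            have hl2 : (2:ℝ) ≤ (l:ℝ) := by exact_mod_cast hl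
            linarith
          · rw [Matrix.mulVec_sub, Matrix.mulVec_smul, hA1, hAd hl, hdvec]
            simp
          · exact ne_of_gt (dotx_pos hl)
        · refine ⟨dvec, ?_, hAd hl, ne_of_gt (dotd_pos hl)⟩
          intro h
          have := congrFun h (.inl ())
          simp [hdvec, deg_center] at this
          have : ((l^2-l:ℕ):ℝ) ≥ 0 := Nat.cast_nonneg _
          linarith
    rw [hset]
    rw [Set.ncard_pair]
    intro h
    have : (l:ℝ) ≥ 2 := by exact_mod_cast hl
    rw [← h] at this; norm_num at this
  · -- degrees
    have hset : {d : ℕ | ∃ v : TlamV l, (Tlam l).degree v = d} = {l^2-l+1, l, 1} := by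
      ext d
      simp only [Set.mem_setOf_eq, Set.mem_insert_iff, Set.mem_singleton_iff]
      constructor
      · rintro ⟨(u | i | p), rfl⟩
        · left; exact deg_center u
        · right; left; exact deg_mid hl i
        · right; right; exact deg_leaf p
      · rintro (rfl | rfl | rfl)
        · exact ⟨.inl (), deg_center ()⟩
        · exact ⟨.inr (.inl ⟨0, hmpos⟩), deg_mid hl _⟩
        · exact ⟨.inr (.inr (⟨0, hmpos⟩, ⟨0, hl1pos⟩)), deg_leaf _⟩
    rw [hset]
    rw [Set.ncard_insert_of_notMem (by simp [hml, hm1]; omega),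
      Set.ncard_insert_of_notMem (by simp [hl1]), Set.ncard_singleton]
  · -- equitable
    intro v w hdeg k
    rcases v with u | i | p <;> rcases w with u' | i' | p'
    · simp only [count_center hl]
    · rw [deg_center, deg_mid hl] at hdeg; exact absurd hdeg hml
    · rw [deg_center, deg_leaf] at hdeg; exact absurd hdeg hm1
    · rw [deg_center, deg_mid hl] at hdeg; exact absurd hdeg.symm hml
    · simp only [count_mid hl]
    · rw [deg_mid hl, deg_leaf] at hdeg; exact absurd hdeg hl1
    · rw [deg_center, deg_leaf] at hdeg; exact absurd hdeg.symm hm1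
    · rw [deg_mid hl, deg_leaf] at hdeg; exact absurd hdeg.symm hl1
    · simp only [count_leaf hl]
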